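/- Let h be the 5-dimensional real Lie algebra with Maurer–Cartan relations dθ^1=0, dθ^2=-θ^1∧θ^2, dθ^3=θ^1∧θ^3, dθ^4=2θ^1∧θ^4, dθ^5=θ^2∧θ^3. Then H^2_{θ^1}(h) is two-dimensional, spanned by the classes of θ^1∧θ^2 and θ^2∧θ^5. -/

import Mathlib

open scoped BigOperators

/-- The space of real-valued `k`-cochains on `L` (as bare functions). -/
abbrev Cochain (L : Type*) (k : ℕ) := (Fin k → L) → ℝ

variable {L : Type*} [LieRing L] [LieAlgebra ℝ L]

/-- A cochain is an alternating multilinear map, i.e. an element of `Hom(Λ^k g, ℝ)`. -/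
def IsAltMap {k : ℕ} (θ : Cochain L k) : Prop :=
  ∃ f : AlternatingMap ℝ L ℝ (Fin k), ⇑f = θ

/-- The Chevalley–Eilenberg differential with trivial coefficients:
`(dθ)(X_0,…,X_k) = ∑_{p<q} (-1)^{p+q} θ([X_p,X_q],X_0,…,X̂_p,…,X̂_q,…,X_k)`. -/
def CEd : {k : ℕ} → Cochain L k → Cochain L (k + 1)
  | 0, _ => fun _ => 0
  | (k + 1), θ => fun X =>
      ∑ p : Fin (k + 2), ∑ q : Fin (k + 2),
        if h : (p : ℕ) < (q : ℕ) then
          ((-1 : ℝ) ^ ((p : ℕ) + (q : ℕ))) *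
            θ (Fin.cons ⁅X p, X q⁆
                (Fin.removeNth ⟨(p : ℕ), lt_of_lt_of_le h (Nat.lt_succ_iff.mp q.isLt)⟩
                  (Fin.removeNth q X)))
        else 0

/-- The wedge product `ω ∧ θ` of a 1-cochain with a `k`-cochain. -/
def oneWedge {k : ℕ} (ω : L → ℝ) (θ : Cochain L k) : Cochain L (k + 1) :=
  fun X => ∑ i : Fin (k + 1), ((-1 : ℝ) ^ (i : ℕ)) * ω (X i) * θ (Fin.removeNth i X)

/-- The deformed differential `d_{λω} θ = dθ + λ ω ∧ θ`. -/
def dDef {k : ℕ} (lam : ℝ) (ω : L → ℝ) (θ : Cochain L k) : Cochain L (k + 1) :=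
  CEd θ + lam • oneWedge ω θ

/-- The submodule of alternating multilinear `k`-cochains, i.e. `C^k(g,ℝ) = Hom(Λ^k g, ℝ)`. -/
def AltSub (L : Type*) [LieRing L] [LieAlgebra ℝ L] (k : ℕ) : Submodule ℝ (Cochain L k) where
  carrier := {θ | IsAltMap θ}
  add_mem' := by rintro θ₁ θ₂ ⟨f, rfl⟩ ⟨g, rfl⟩; exact ⟨f + g, rfl⟩
  zero_mem' := ⟨0, rfl⟩
  smul_mem' := by rintro c θ ⟨f, rfl⟩; exact ⟨c • f, rfl⟩

/-- The Chevalley–Eilenberg differential as a linear map. -/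
def CEdL (L : Type*) [LieRing L] [LieAlgebra ℝ L] (k : ℕ) :
    Cochain L k →ₗ[ℝ] Cochain L (k + 1) where
  toFun := CEd
  map_add' θ₁ θ₂ := by
    cases k with
    | zero => funext X; exact (zero_add (0:ℝ)).symm
    | succ k =>
      funext X
      show _ = CEd θ₁ X + CEd θ₂ X
      simp only [CEd, Pi.add_apply]
      rw [← Finset.sum_add_distrib]
      refine Finset.sum_congr rfl fun p _ => ?_
      rw [← Finset.sum_add_distrib]
      refine Finset.sum_congr rfl fun q _ => ?_
      split_ifs <;> simp [mul_add]
  map_smul' c θ := by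
    cases k with
    | zero => funext X; exact (smul_zero c).symm
    | succ k =>
      funext X
      show _ = c * CEd θ X
      simp only [CEd, Pi.smul_apply, smul_eq_mul]
      rw [Finset.mul_sum]
      refine Finset.sum_congr rfl fun p _ => ?_
      rw [Finset.mul_sum]
      refine Finset.sum_congr rfl fun q _ => ?_
      split_ifs with h
      · ring
      · exact (mul_zero c).symm

/-- The operator `θ ↦ ω ∧ θ` as a linear map. -/
def oneWedgeL (L : Type*) [LieRing L] [LieAlgebra ℝ L] (ω : L → ℝ) (k : ℕ) :
    Cochain L k →ₗ[ℝ] Cochain L (k + 1) where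
  toFun := oneWedge ω
  map_add' θ₁ θ₂ := by
    funext X
    simp [oneWedge, mul_add, Finset.sum_add_distrib]
  map_smul' c θ := by
    funext X
    simp only [oneWedge, Pi.smul_apply, smul_eq_mul, RingHom.id_apply]
    rw [Finset.mul_sum]
    exact Finset.sum_congr rfl fun i _ => by ring

/-- The deformed differential `d_{λω}` as a linear map. -/
noncomputable def dDefL (L : Type*) [LieRing L] [LieAlgebra ℝ L]
    (lam : ℝ) (ω : L → ℝ) (k : ℕ) : Cochain L k →ₗ[ℝ] Cochain L (k + 1) :=
  CEdL L k + lam • oneWedgeL L ω k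

/-- Deformed `k`-cocycles: alternating cochains with `d_{λω} θ = 0`. -/
noncomputable def Zdef (L : Type*) [LieRing L] [LieAlgebra ℝ L]
    (lam : ℝ) (ω : L → ℝ) (k : ℕ) : Submodule ℝ (Cochain L k) :=
  AltSub L k ⊓ LinearMap.ker (dDefL L lam ω k)

/-- Deformed `(k+1)`-coboundaries: images under `d_{λω}` of alternating `k`-cochains. -/
noncomputable def Bdef (L : Type*) [LieRing L] [LieAlgebra ℝ L]
    (lam : ℝ) (ω : L → ℝ) (k : ℕ) : Submodule ℝ (Cochain L (k + 1)) :=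
  Submodule.map (dDefL L lam ω k) (AltSub L k)

/-- The deformed cohomology `H^{k+1}_{λω}(g)` = closed forms modulo exact forms. -/
noncomputable abbrev Hdef (L : Type*) [LieRing L] [LieAlgebra ℝ L]
    (lam : ℝ) (ω : L → ℝ) (k : ℕ) :=
  Zdef L lam ω (k + 1) ⧸
    Submodule.comap (Zdef L lam ω (k + 1)).subtype (Bdef L lam ω k)

/-- The 1-cochain associated to a linear functional. -/
def c1 {L : Type*} (f : L → ℝ) : Cochain L 1 := fun X => f (X 0)

/-- The wedge product `f ∧ g` of two 1-forms, as a 2-cochain. -/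
def w2 {L : Type*} (f g : L → ℝ) : Cochain L 2 :=
  fun X => f (X 0) * g (X 1) - f (X 1) * g (X 0)

set_option linter.unusedSectionVars false
set_option linter.unnecessarySeqFocus false
set_option maxHeartbeats 1000000

section Helpers
variable {L : Type*} [LieRing L] [LieAlgebra ℝ L]

private lemma eta2 (X : Fin 2 → L) : ![X 0, X 1] = X := by
  funext i; fin_cases i <;> rfl

private lemma CEd_one (θ : Cochain L 1) (X : Fin 2 → L) :
    CEd θ X = -θ ![⁅X 0, X 1⁆] := by
  show (∑ p : Fin 2, ∑ q : Fin 2, _) = _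
  rw [Fin.sum_univ_two, Fin.sum_univ_two]
  norm_num
  congr 1
  funext i
  fin_cases i
  simp [Fin.removeNth, Fin.succAbove]

private lemma CEd_two (θ : Cochain L 2) (X : Fin 3 → L) :
    CEd θ X = -θ ![⁅X 0, X 1⁆, X 2] + θ ![⁅X 0, X 2⁆, X 1] - θ ![⁅X 1, X 2⁆, X 0] := by
  show (∑ p : Fin 3, ∑ q : Fin 3, _) = _
  rw [Fin.sum_univ_three, Fin.sum_univ_three, Fin.sum_univ_three, Fin.sum_univ_three]
  norm_num
  have h1 : Fin.cons ⁅X 0, X 1⁆ (Fin.tail (Fin.removeNth 1 X)) = ![⁅X 0, X 1⁆, X 2] := by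
    funext i; fin_cases i <;> simp [Fin.removeNth, Fin.succAbove, Fin.tail]
  have h2 : Fin.cons ⁅X 0, X 2⁆ (Fin.tail (Fin.removeNth 2 X)) = ![⁅X 0, X 2⁆, X 1] := by
    funext i; fin_cases i <;> simp [Fin.removeNth, Fin.succAbove, Fin.tail]
  have h3 : Fin.cons ⁅X 1, X 2⁆ (Fin.removeNth 1 (Fin.removeNth 2 X)) = ![⁅X 1, X 2⁆, X 0] := by
    funext i; fin_cases i <;> simp [Fin.removeNth, Fin.succAbove, Fin.tail]
  rw [h1, h2, h3]; ring

private lemma oneWedge_one (ω : L → ℝ) (θ : Cochain L 1) (X : Fin 2 → L) :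
    oneWedge ω θ X = ω (X 0) * θ ![X 1] - ω (X 1) * θ ![X 0] := by
  show (∑ i : Fin 2, _) = _
  rw [Fin.sum_univ_two]
  have h1 : Fin.removeNth (0 : Fin 2) X = ![X 1] := by
    funext i; fin_cases i <;> simp [Fin.removeNth, Fin.succAbove]
  have h2 : Fin.removeNth (1 : Fin 2) X = ![X 0] := by
    funext i; fin_cases i <;> simp [Fin.removeNth, Fin.succAbove]
  rw [h1, h2]; norm_num; ring

private lemma oneWedge_two (ω : L → ℝ) (θ : Cochain L 2) (X : Fin 3 → L) :
    oneWedge ω θ X = ω (X 0) * θ ![X 1, X 2] - ω (X 1) * θ ![X 0, X 2] + ω (X 2) * θ ![X 0, X 1] := by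
  show (∑ i : Fin 3, _) = _
  rw [Fin.sum_univ_three]
  have h1 : Fin.removeNth (0 : Fin 3) X = ![X 1, X 2] := by
    funext i; fin_cases i <;> simp [Fin.removeNth, Fin.succAbove]
  have h2 : Fin.removeNth (1 : Fin 3) X = ![X 0, X 2] := by
    funext i; fin_cases i <;> simp [Fin.removeNth, Fin.succAbove]
  have h3 : Fin.removeNth (2 : Fin 3) X = ![X 0, X 1] := by
    funext i; fin_cases i <;> simp [Fin.removeNth, Fin.succAbove]
  rw [h1, h2, h3]; norm_num; ring

private lemma upd0 (a b z : L) : Function.update ![a, b] 0 z = ![z, b] := by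
  funext i; fin_cases i <;> simp
private lemma upd1 (a b z : L) : Function.update ![a, b] 1 z = ![a, z] := by
  funext i; fin_cases i <;> simp

variable (f : AlternatingMap ℝ L ℝ (Fin 2))

private lemma alt2_smul_left (c : ℝ) (x y : L) : f ![c • x, y] = c * f ![x, y] := by
  rw [← upd0 x y (c • x), f.map_update_smul, upd0, smul_eq_mul]

private lemma alt2_smul_right (c : ℝ) (x y : L) : f ![x, c • y] = c * f ![x, y] := by
  rw [← upd1 x y (c • y), f.map_update_smul, upd1, smul_eq_mul]

private lemma alt2_neg_left (x y : L) : f ![-x, y] = -f ![x, y] := by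
  have := alt2_smul_left f (-1) x y
  simpa using this

private lemma alt2_swap (x y : L) : f ![y, x] = -f ![x, y] := by
  have := f.map_swap ![x, y] (i := 0) (j := 1) (by decide)
  convert this using 2
  funext i; fin_cases i <;> simp [Equiv.swap_apply_of_ne_of_ne]

private lemma alt2_diag (x : L) : f ![x, x] = 0 :=
  f.map_eq_zero_of_eq ![x, x] (i := 0) (j := 1) (by simp) (by decide)

private lemma alt2_zero_left (y : L) : f ![0, y] = 0 :=
  f.map_coord_zero (i := 0) (by simp)

private lemma alt2_zero_right (x : L) : f ![x, 0] = 0 :=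
  f.map_coord_zero (i := 1) (by simp)

private lemma alt2_expand (E : Module.Basis (Fin 5) ℝ L) (x y : L) :
    f ![x, y] = ∑ i : Fin 5, ∑ j : Fin 5,
      E.repr x i * E.repr y j * f ![E i, E j] := by
  conv_lhs => rw [← E.sum_repr x, ← E.sum_repr y]
  rw [show (![∑ i : Fin 5, E.repr x i • E i, ∑ i : Fin 5, E.repr y i • E i] : Fin 2 → L)
      = Function.update ![y, ∑ i : Fin 5, E.repr y i • E i] 0 (∑ i : Fin 5, E.repr x i • E i)
      from (upd0 _ _ _).symm,
    f.map_update_sum]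
  refine Finset.sum_congr rfl fun i _ => ?_
  rw [upd0, alt2_smul_left,
    show (![E i, ∑ j : Fin 5, E.repr y j • E j] : Fin 2 → L)
      = Function.update ![E i, E i] 1 (∑ j : Fin 5, E.repr y j • E j) from (upd1 _ _ _).symm,
    f.map_update_sum, Finset.mul_sum]
  refine Finset.sum_congr rfl fun j _ => ?_
  rw [upd1, alt2_smul_right]
  ring

private lemma alt1_zero (g : AlternatingMap ℝ L ℝ (Fin 1)) : g ![0] = 0 :=
  g.map_coord_zero (i := 0) (by simp)

private lemma dDefL_one_apply (ω : L → ℝ) (g : Cochain L 1) (X : Fin 2 → L) :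
    dDefL L 1 ω 1 g X = -g ![⁅X 0, X 1⁆] + (ω (X 0) * g ![X 1] - ω (X 1) * g ![X 0]) := by
  show (CEdL L 1 + (1:ℝ) • oneWedgeL L ω 1) g X = _
  rw [LinearMap.add_apply, LinearMap.smul_apply]
  show CEd g X + ((1:ℝ) • oneWedge ω g) X = _
  rw [CEd_one, Pi.smul_apply, smul_eq_mul, oneWedge_one]
  ring

private lemma dDefL_two_apply (ω : L → ℝ) (θ : Cochain L 2) (X : Fin 3 → L) :
    dDefL L 1 ω 2 θ X = (-θ ![⁅X 0, X 1⁆, X 2] + θ ![⁅X 0, X 2⁆, X 1] - θ ![⁅X 1, X 2⁆, X 0])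
      + (ω (X 0) * θ ![X 1, X 2] - ω (X 1) * θ ![X 0, X 2] + ω (X 2) * θ ![X 0, X 1]) := by
  show (CEdL L 2 + (1:ℝ) • oneWedgeL L ω 2) θ X = _
  rw [LinearMap.add_apply, LinearMap.smul_apply]
  show CEd θ X + ((1:ℝ) • oneWedge ω θ) X = _
  rw [CEd_two, Pi.smul_apply, smul_eq_mul, oneWedge_two]
  ring

private def wedgeML (f g : L →ₗ[ℝ] ℝ) : MultilinearMap ℝ (fun _ : Fin 2 => L) ℝ where
  toFun X := f (X 0) * g (X 1) - f (X 1) * g (X 0)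
  map_update_add' := by
    intro inst X i x y
    have : inst = instDecidableEqFin 2 := Subsingleton.elim _ _
    subst this
    fin_cases i <;>
      simp [Function.update_apply] <;> ring
  map_update_smul' := by
    intro inst X i c x
    have : inst = instDecidableEqFin 2 := Subsingleton.elim _ _
    subst this
    fin_cases i <;>
      simp [Function.update_apply] <;> ring

private def wedgeAlt (f g : L →ₗ[ℝ] ℝ) : AlternatingMap ℝ L ℝ (Fin 2) :=
  { wedgeML f g with
    map_eq_zero_of_eq' := by
      intro X i j hij hne
      fin_cases i <;> fin_cases j <;>
        first
          | exact absurd rfl hne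
          | (show f (X 0) * g (X 1) - f (X 1) * g (X 0) = 0
             rw [show X 0 = X 1 from hij]; ring)
          | (show f (X 0) * g (X 1) - f (X 1) * g (X 0) = 0
             rw [show X 1 = X 0 from hij]; ring) }

private lemma wedgeAlt_apply (f g : L →ₗ[ℝ] ℝ) (X : Fin 2 → L) :
    wedgeAlt f g X = f (X 0) * g (X 1) - f (X 1) * g (X 0) := rfl

private lemma isAlt_w2 (f g : L →ₗ[ℝ] ℝ) : IsAltMap (w2 (⇑f) (⇑g) : Cochain L 2) :=
  ⟨wedgeAlt f g, rfl⟩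

private lemma isAlt_c1 (f : L →ₗ[ℝ] ℝ) : IsAltMap (c1 (⇑f) : Cochain L 1) :=
  ⟨AlternatingMap.ofSubsingleton ℝ L ℝ 0 f, rfl⟩

end Helpers

section Brkt
variable {H : Type*} [LieRing H] [LieAlgebra ℝ H] (E : Module.Basis (Fin 5) ℝ H)
    (b01 : ⁅E 0, E 1⁆ = E 1) (b02 : ⁅E 0, E 2⁆ = -E 2)
    (b03 : ⁅E 0, E 3⁆ = (-2 : ℝ) • E 3) (b12 : ⁅E 1, E 2⁆ = -E 4)
    (b04 : ⁅E 0, E 4⁆ = 0) (b13 : ⁅E 1, E 3⁆ = 0) (b14 : ⁅E 1, E 4⁆ = 0)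
    (b23 : ⁅E 2, E 3⁆ = 0) (b24 : ⁅E 2, E 4⁆ = 0) (b34 : ⁅E 3, E 4⁆ = 0)

private lemma sum_lie' {ι : Type*} (s : Finset ι) (f : ι → H) (y : H) :
    ⁅∑ i ∈ s, f i, y⁆ = ∑ i ∈ s, ⁅f i, y⁆ := by
  classical
  induction s using Finset.induction with
  | empty => simp
  | insert _ _ h ih => rw [Finset.sum_insert h, Finset.sum_insert h, add_lie, ih]

private lemma lie_sum' {ι : Type*} (s : Finset ι) (x : H) (f : ι → H) :
    ⁅x, ∑ i ∈ s, f i⁆ = ∑ i ∈ s, ⁅x, f i⁆ := by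
  classical
  induction s using Finset.induction with
  | empty => simp
  | insert _ _ h ih => rw [Finset.sum_insert h, Finset.sum_insert h, lie_add, ih]

include b01 b02 b03 b12 b04 b13 b14 b23 b24 b34 in
private lemma brkt (x y : H) :
    ⁅x, y⁆ = (E.repr x 0 * E.repr y 1 - E.repr x 1 * E.repr y 0) • E 1
      + (E.repr x 2 * E.repr y 0 - E.repr x 0 * E.repr y 2) • E 2
      + (2 * (E.repr x 3 * E.repr y 0 - E.repr x 0 * E.repr y 3)) • E 3
      + (E.repr x 2 * E.repr y 1 - E.repr x 1 * E.repr y 2) • E 4 := by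
  have b10 : ⁅E 1, E 0⁆ = -E 1 := by rw [← lie_skew, b01]
  have b20 : ⁅E 2, E 0⁆ = E 2 := by rw [← lie_skew, b02]; simp
  have b30 : ⁅E 3, E 0⁆ = (2 : ℝ) • E 3 := by rw [← lie_skew, b03]; simp
  have b21 : ⁅E 2, E 1⁆ = E 4 := by rw [← lie_skew, b12]; simp
  have b40 : ⁅E 4, E 0⁆ = 0 := by rw [← lie_skew, b04]; simp
  have b31 : ⁅E 3, E 1⁆ = 0 := by rw [← lie_skew, b13]; simp
  have b41 : ⁅E 4, E 1⁆ = 0 := by rw [← lie_skew, b14]; simp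
  have b32 : ⁅E 3, E 2⁆ = 0 := by rw [← lie_skew, b23]; simp
  have b42 : ⁅E 4, E 2⁆ = 0 := by rw [← lie_skew, b24]; simp
  have b43 : ⁅E 4, E 3⁆ = 0 := by rw [← lie_skew, b34]; simp
  conv_lhs => rw [← E.sum_repr x, ← E.sum_repr y]
  rw [sum_lie']
  simp only [lie_sum']
  simp only [smul_lie, lie_smul]
  rw [Fin.sum_univ_five]
  simp only [Fin.sum_univ_five]
  simp only [b01, b02, b03, b04, b12, b13, b14, b23, b24, b34, b10, b20, b30, b21, b40,
    b31, b41, b32, b42, b43, lie_self, smul_zero, smul_neg, smul_smul]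
  module

include b01 b02 b03 b12 b04 b13 b14 b23 b24 b34 in
private lemma hrepr (x y : H) (m : Fin 5) :
    E.repr ⁅x, y⁆ m =
      (E.repr x 0 * E.repr y 1 - E.repr x 1 * E.repr y 0) * (if (1 : Fin 5) = m then 1 else 0)
      + (E.repr x 2 * E.repr y 0 - E.repr x 0 * E.repr y 2) * (if (2 : Fin 5) = m then 1 else 0)
      + (2 * (E.repr x 3 * E.repr y 0 - E.repr x 0 * E.repr y 3)) * (if (3 : Fin 5) = m then 1 else 0)
      + (E.repr x 2 * E.repr y 1 - E.repr x 1 * E.repr y 2) * (if (4 : Fin 5) = m then 1 else 0) := by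
  rw [brkt E b01 b02 b03 b12 b04 b13 b14 b23 b24 b34]
  simp only [map_add, map_smul, Finsupp.coe_add, Finsupp.coe_smul, Pi.add_apply,
    Pi.smul_apply, Module.Basis.repr_self, Finsupp.single_apply, smul_eq_mul]

end Brkt

set_option maxHeartbeats 2000000 in
/-- `H^2_{θ^1}(h)` is two-dimensional, spanned by the classes of
`θ^1∧θ^2` and `θ^2∧θ^5`. -/
theorem H2_deformed_one
    (H : Type*) [LieRing H] [LieAlgebra ℝ H] (E : Module.Basis (Fin 5) ℝ H)
    (b01 : ⁅E 0, E 1⁆ = E 1) (b02 : ⁅E 0, E 2⁆ = -E 2)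
    (b03 : ⁅E 0, E 3⁆ = (-2 : ℝ) • E 3) (b12 : ⁅E 1, E 2⁆ = -E 4)
    (b04 : ⁅E 0, E 4⁆ = 0) (b13 : ⁅E 1, E 3⁆ = 0) (b14 : ⁅E 1, E 4⁆ = 0)
    (b23 : ⁅E 2, E 3⁆ = 0) (b24 : ⁅E 2, E 4⁆ = 0) (b34 : ⁅E 3, E 4⁆ = 0) :
    Module.finrank ℝ (Hdef H 1 (fun v => E.repr v 0) 1) = 2 ∧
    ∃ (h12 : w2 (fun v => E.repr v 0) (fun v => E.repr v 1) ∈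
        Zdef H 1 (fun v => E.repr v 0) 2)
      (h25 : w2 (fun v => E.repr v 1) (fun v => E.repr v 4) ∈
        Zdef H 1 (fun v => E.repr v 0) 2),
      Submodule.span ℝ
        ({Submodule.Quotient.mk
            (⟨w2 (fun v => E.repr v 0) (fun v => E.repr v 1), h12⟩ :
              Zdef H 1 (fun v => E.repr v 0) 2),
          Submodule.Quotient.mk
            (⟨w2 (fun v => E.repr v 1) (fun v => E.repr v 4), h25⟩ :
              Zdef H 1 (fun v => E.repr v 0) 2)} :
          Set (Hdef H 1 (fun v => E.repr v 0) 1)) = ⊤ := by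
  classical
  have hrep := hrepr E b01 b02 b03 b12 b04 b13 b14 b23 b24 b34
  -- membership of w2 θ0 θ1
  have h12 : w2 (fun v => E.repr v 0) (fun v => E.repr v 1) ∈
      Zdef H 1 (fun v => E.repr v 0) 2 := by
    refine Submodule.mem_inf.2 ⟨?_, ?_⟩
    · have := isAlt_w2 (L := H) (E.coord 0) (E.coord 1)
      exact this
    · rw [LinearMap.mem_ker]
      funext X
      rw [dDefL_two_apply]
      simp only [w2, Matrix.cons_val_zero, Matrix.cons_val_one, Matrix.head_cons, hrep,
        Pi.zero_apply, Fin.reduceEq, reduceIte]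
      ring
  have h25 : w2 (fun v => E.repr v 1) (fun v => E.repr v 4) ∈
      Zdef H 1 (fun v => E.repr v 0) 2 := by
    refine Submodule.mem_inf.2 ⟨?_, ?_⟩
    · have := isAlt_w2 (L := H) (E.coord 1) (E.coord 4)
      exact this
    · rw [LinearMap.mem_ker]
      funext X
      rw [dDefL_two_apply]
      simp only [w2, Matrix.cons_val_zero, Matrix.cons_val_one, Matrix.head_cons, hrep,
        Pi.zero_apply, Fin.reduceEq, reduceIte]
      ring
  -- coordinate functionals are alternating
  have hcoord : ∀ m : Fin 5, ⇑(E.coord m) = fun v : H => E.repr v m := by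
    intro m; funext v; simp [Module.Basis.coord_apply]
  have hc1mem : ∀ m : Fin 5, (c1 (fun v => E.repr v m) : Cochain H 1) ∈ AltSub H 1 := by
    intro m
    have := isAlt_c1 (L := H) (E.coord m)
    rwa [hcoord m] at this
  -- the evaluation map Φ
  let ev : (Fin 2 → H) → (Cochain H 2 →ₗ[ℝ] ℝ) := fun X =>
    { toFun := fun t => t X, map_add' := fun _ _ => rfl, map_smul' := fun _ _ => rfl }
  let Z := Zdef H 1 (fun v => E.repr v 0) 2
  let Φ : ↥Z →ₗ[ℝ] ℝ × ℝ := ((ev ![E 0, E 1]).prod (ev ![E 1, E 4])).comp Z.subtype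
  have hΦ : ∀ z : ↥Z, Φ z = ((z : Cochain H 2) ![E 0, E 1], (z : Cochain H 2) ![E 1, E 4]) :=
    fun z => rfl
  -- kernel of Φ is the coboundary submodule
  have hker : Submodule.comap Z.subtype (Bdef H 1 (fun v => E.repr v 0) 1)
      = LinearMap.ker Φ := by
    apply le_antisymm
    · rintro ⟨t, ht⟩ hmem
      have hmem' : t ∈ Bdef H 1 (fun v => E.repr v 0) 1 := hmem
      obtain ⟨g, hgAlt, hgd⟩ := hmem'
      have hgd' : (dDefL H 1 (fun v => E.repr v 0) 1) g = t := hgd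
      obtain ⟨ga, hga⟩ := hgAlt
      rw [LinearMap.mem_ker, hΦ]
      have h1 : t ![E 0, E 1] = 0 := by
        rw [← congrFun hgd' ![E 0, E 1], dDefL_one_apply]
        simp only [Matrix.cons_val_zero, Matrix.cons_val_one, Matrix.head_cons, b01]
        simp [Module.Basis.repr_self, Finsupp.single_apply]
      have h2 : t ![E 1, E 4] = 0 := by
        rw [← congrFun hgd' ![E 1, E 4], dDefL_one_apply]
        simp only [Matrix.cons_val_zero, Matrix.cons_val_one, Matrix.head_cons, b14]
        rw [← hga, alt1_zero]
        simp [Module.Basis.repr_self, Finsupp.single_apply, Fin.reduceEq]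
      simp [h1, h2, Prod.ext_iff]
    · rintro ⟨t, ht⟩ hk
      rw [LinearMap.mem_ker, hΦ, Prod.ext_iff] at hk
      obtain ⟨hk1, hk2⟩ := hk
      simp only [Prod.fst_zero, Prod.snd_zero] at hk1 hk2
      obtain ⟨hAlt, hd⟩ := Submodule.mem_inf.1 ht
      obtain ⟨fa, hfa⟩ := hAlt
      rw [LinearMap.mem_ker] at hd
      subst hfa
      show ⇑fa ∈ Bdef H 1 (fun v => E.repr v 0) 1
      -- derive the cocycle relations at basis triples
      have key : ∀ Y : Fin 3 → H,
          (-fa ![⁅Y 0, Y 1⁆, Y 2] + fa ![⁅Y 0, Y 2⁆, Y 1] - fa ![⁅Y 1, Y 2⁆, Y 0])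
          + (E.repr (Y 0) 0 * fa ![Y 1, Y 2] - E.repr (Y 1) 0 * fa ![Y 0, Y 2]
              + E.repr (Y 2) 0 * fa ![Y 0, Y 1]) = 0 := by
        intro Y
        have := congrFun hd Y
        rwa [dDefL_two_apply] at this
      have h012 := key ![E 0, E 1, E 2]
      have h013 := key ![E 0, E 1, E 3]
      have h023 := key ![E 0, E 2, E 3]
      have h024 := key ![E 0, E 2, E 4]
      have h034 := key ![E 0, E 3, E 4]
      simp only [Matrix.cons_val_zero, Matrix.cons_val_one, Matrix.head_cons,
        Matrix.cons_val_two, Matrix.tail_cons, b01, b02, b03, b12, b13, b23, b24, b34,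
        b04, b14, alt2_neg_left, alt2_smul_left, alt2_zero_left, Module.Basis.repr_self,
        Finsupp.single_apply, Fin.reduceEq, reduceIte, alt2_diag]
        at h012 h013 h023 h024 h034
      have s21 : fa ![E 2, E 1] = -fa ![E 1, E 2] := alt2_swap fa _ _
      have s40 : fa ![E 4, E 0] = -fa ![E 0, E 4] := alt2_swap fa _ _
      have s31 : fa ![E 3, E 1] = -fa ![E 1, E 3] := alt2_swap fa _ _
      have s32 : fa ![E 3, E 2] = -fa ![E 2, E 3] := alt2_swap fa _ _
      rw [s21, s40] at h012
      rw [s31] at h013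
      rw [s32] at h023
      have r04 : fa ![E 1, E 2] = fa ![E 0, E 4] := by linarith
      have r13 : fa ![E 1, E 3] = 0 := by linarith
      have r23 : fa ![E 2, E 3] = 0 := by linarith
      have r24 : fa ![E 2, E 4] = 0 := by linarith
      have r34 : fa ![E 3, E 4] = 0 := by linarith
      -- exhibit the primitive
      refine ⟨(fa ![E 0, E 2] / 2) • c1 (fun v => E.repr v 2)
          + (fa ![E 0, E 3] / 3) • c1 (fun v => E.repr v 3)
          + (fa ![E 0, E 4]) • c1 (fun v => E.repr v 4), ?_, ?_⟩
      · exact Submodule.add_mem _ (Submodule.add_mem _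
          (Submodule.smul_mem _ _ (hc1mem 2)) (Submodule.smul_mem _ _ (hc1mem 3)))
          (Submodule.smul_mem _ _ (hc1mem 4))
      · funext X
        rw [map_add, map_add, map_smul, map_smul, map_smul]
        simp only [Pi.add_apply, Pi.smul_apply, smul_eq_mul]
        rw [dDefL_one_apply, dDefL_one_apply, dDefL_one_apply]
        simp only [c1, Matrix.cons_val_zero, hrep, Fin.reduceEq, reduceIte]
        conv_rhs => rw [show fa X = fa ![X 0, X 1] from congrArg _ (eta2 X).symm]
        rw [alt2_expand fa E (X 0) (X 1)]
        simp only [Fin.sum_univ_five]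
        have s10 : fa ![E 1, E 0] = -fa ![E 0, E 1] := alt2_swap fa _ _
        have s20 : fa ![E 2, E 0] = -fa ![E 0, E 2] := alt2_swap fa _ _
        have s30 : fa ![E 3, E 0] = -fa ![E 0, E 3] := alt2_swap fa _ _
        have s41 : fa ![E 4, E 1] = -fa ![E 1, E 4] := alt2_swap fa _ _
        have s42 : fa ![E 4, E 2] = -fa ![E 2, E 4] := alt2_swap fa _ _
        have s43 : fa ![E 4, E 3] = -fa ![E 3, E 4] := alt2_swap fa _ _
        rw [s10, s20, s30, s21, s40, s31, s41, s32, s42, s43,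
          alt2_diag, alt2_diag, alt2_diag, alt2_diag, alt2_diag,
          hk1, hk2, r04, r13, r23, r24, r34]
        ring
  -- values of Φ on the generators
  let z1 : ↥Z := ⟨w2 (fun v => E.repr v 0) (fun v => E.repr v 1), h12⟩
  let z2 : ↥Z := ⟨w2 (fun v => E.repr v 1) (fun v => E.repr v 4), h25⟩
  have hv1 : Φ z1 = (1, 0) := by
    rw [hΦ]
    simp [z1, w2, Module.Basis.repr_self, Finsupp.single_apply, Prod.ext_iff]
  have hv2 : Φ z2 = (0, 1) := by
    rw [hΦ]
    simp [z2, w2, Module.Basis.repr_self, Finsupp.single_apply, Prod.ext_iff]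
  have hrange : LinearMap.range Φ = ⊤ := by
    rw [eq_top_iff]
    rintro ⟨a, b⟩ -
    have hab : a • ((1:ℝ),(0:ℝ)) + b • ((0:ℝ),(1:ℝ)) = (a, b) := by
      simp [Prod.ext_iff]
    rw [← hab, ← hv1, ← hv2]
    exact Submodule.add_mem _ (Submodule.smul_mem _ _ ⟨z1, rfl⟩)
      (Submodule.smul_mem _ _ ⟨z2, rfl⟩)
  let N := Submodule.comap Z.subtype (Bdef H 1 (fun v => E.repr v 0) 1)
  have hNk : N = LinearMap.ker Φ := hker
  let Φbar : (↥Z ⧸ N) →ₗ[ℝ] ℝ × ℝ := N.liftQ Φ (le_of_eq hNk)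
  have hinj : LinearMap.ker Φbar = ⊥ := Submodule.ker_liftQ_eq_bot' N Φ hNk
  have hrng : LinearMap.range Φbar = ⊤ := by
    rw [Submodule.range_liftQ, hrange]
  have span_pair_top :
      Submodule.span ℝ ({((1:ℝ),(0:ℝ)), ((0:ℝ),(1:ℝ))} : Set (ℝ × ℝ)) = ⊤ := by
    rw [eq_top_iff]
    rintro ⟨a, b⟩ -
    exact Submodule.mem_span_pair.2 ⟨a, b, by simp [Prod.ext_iff]⟩
  refine ⟨?_, h12, h25, ?_⟩
  · have e : (↥Z ⧸ N) ≃ₗ[ℝ] ℝ × ℝ :=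
      LinearEquiv.ofBijective Φbar
        ⟨LinearMap.ker_eq_bot.1 hinj, LinearMap.range_eq_top.1 hrng⟩
    rw [e.finrank_eq]
    simp [Module.finrank_prod]
  · have hq1 : Φbar (Submodule.Quotient.mk z1) = (1, 0) := by
      rw [Submodule.liftQ_apply]; exact hv1
    have hq2 : Φbar (Submodule.Quotient.mk z2) = (0, 1) := by
      rw [Submodule.liftQ_apply]; exact hv2
    have heq : Submodule.map Φbar (Submodule.span ℝ
        {Submodule.Quotient.mk z1, Submodule.Quotient.mk z2})
        = Submodule.map Φbar ⊤ := by
      rw [Submodule.map_span, Submodule.map_top, hrng,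
        Set.image_insert_eq, Set.image_singleton, hq1, hq2, span_pair_top]
    exact Submodule.map_injective_of_injective (LinearMap.ker_eq_bot.1 hinj) heq
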